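/- Let X be a topological space, κ an infinite cardinal, and {U_α : α < κ} a cellular family in X indexed faithfully by κ. Then ℵ_κ is not a weak precaliber for X. If, in addition, for every α < κ the subspace U_α satisfies o(U_α) ≥ ℵ_α, then ℵ_κ is not a weak precaliber* for X. -/

import Mathlib

open Cardinal Set

universe u

/-- `κ` is a caliber for `X`: every κ-indexed family of non-empty open sets
(repetitions allowed) has a κ-sized subfamily with non-empty intersection. -/
def IsCaliber (X : Type u) [TopologicalSpace X] (κ : Cardinal.{u}) : Prop :=
  ∀ {ι : Type u} (U : ι → Set X), #ι = κ → (∀ i, IsOpen (U i)) → (∀ i, (U i).Nonempty) →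
    ∃ J : Set ι, #J = κ ∧ (⋂ i ∈ J, U i).Nonempty

/-- `κ` is a precaliber for `X`: every κ-indexed family of non-empty open sets
has a κ-sized subfamily which is centered. -/
def IsPrecaliber (X : Type u) [TopologicalSpace X] (κ : Cardinal.{u}) : Prop :=
  ∀ {ι : Type u} (U : ι → Set X), #ι = κ → (∀ i, IsOpen (U i)) → (∀ i, (U i).Nonempty) →
    ∃ J : Set ι, #J = κ ∧
      ∀ s : Finset ι, ↑s ⊆ J → s.Nonempty → (⋂ i ∈ s, U i).Nonempty

/-- `κ` is a weak precaliber for `X`: every κ-indexed family of non-empty open sets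
has a κ-sized subfamily which is linked. -/
def IsWeakPrecaliber (X : Type u) [TopologicalSpace X] (κ : Cardinal.{u}) : Prop :=
  ∀ {ι : Type u} (U : ι → Set X), #ι = κ → (∀ i, IsOpen (U i)) → (∀ i, (U i).Nonempty) →
    ∃ J : Set ι, #J = κ ∧ ∀ i ∈ J, ∀ j ∈ J, (U i ∩ U j).Nonempty

/-- `κ` is a caliber* for `X`: every family of non-empty open sets of cardinality `κ`
has a subfamily of cardinality `κ` with non-empty intersection. -/
def IsCaliberStar (X : Type u) [TopologicalSpace X] (κ : Cardinal.{u}) : Prop :=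
  ∀ 𝒰 : Set (Set X), #𝒰 = κ → (∀ U ∈ 𝒰, IsOpen U) → (∀ U ∈ 𝒰, U.Nonempty) →
    ∃ 𝒱 ⊆ 𝒰, #𝒱 = κ ∧ (⋂₀ 𝒱).Nonempty

/-- `κ` is a precaliber* for `X`: every family of non-empty open sets of cardinality `κ`
has a centered subfamily of cardinality `κ`. -/
def IsPrecaliberStar (X : Type u) [TopologicalSpace X] (κ : Cardinal.{u}) : Prop :=
  ∀ 𝒰 : Set (Set X), #𝒰 = κ → (∀ U ∈ 𝒰, IsOpen U) → (∀ U ∈ 𝒰, U.Nonempty) →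
    ∃ 𝒱 ⊆ 𝒰, #𝒱 = κ ∧
      ∀ s : Finset (Set X), ↑s ⊆ 𝒱 → s.Nonempty → (⋂₀ (↑s : Set (Set X))).Nonempty

/-- `κ` is a weak precaliber* for `X`: every family of non-empty open sets of
cardinality `κ` has a linked subfamily of cardinality `κ`. -/
def IsWeakPrecaliberStar (X : Type u) [TopologicalSpace X] (κ : Cardinal.{u}) : Prop :=
  ∀ 𝒰 : Set (Set X), #𝒰 = κ → (∀ U ∈ 𝒰, IsOpen U) → (∀ U ∈ 𝒰, U.Nonempty) →
    ∃ 𝒱 ⊆ 𝒰, #𝒱 = κ ∧ ∀ U ∈ 𝒱, ∀ V ∈ 𝒱, (U ∩ V).Nonempty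

/-- `o X` : the number of open subsets of `X`. -/
def oCard (X : Type u) [TopologicalSpace X] : Cardinal.{u} :=
  #{U : Set X | IsOpen U}

/-- A cellular family: a pairwise disjoint collection of non-empty open sets. -/
def IsCellularFamily (X : Type u) [TopologicalSpace X] (𝒰 : Set (Set X)) : Prop :=
  (∀ U ∈ 𝒰, IsOpen U) ∧ (∀ U ∈ 𝒰, U.Nonempty) ∧ 𝒰.Pairwise Disjoint


lemma exists_index_lt (κ : Cardinal.{u}) (hκ : ℵ₀ ≤ κ) (x : Ordinal.{u})
    (hx : x < (Cardinal.aleph κ.ord).ord) :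
    ∃ a : {α : Ordinal.{u} // α < κ.ord}, x < (Cardinal.aleph a.1).ord := by
  by_contra hc
  push_neg at hc
  have h1 : ∀ a : Set.Iio κ.ord, Cardinal.aleph a.1 ≤ x.card := by
    intro a
    have := hc ⟨a.1, a.2⟩
    calc Cardinal.aleph a.1 = ((Cardinal.aleph a.1).ord).card := (Cardinal.card_ord _).symm
      _ ≤ x.card := Ordinal.card_le_card this
  have hne : Nonempty (Set.Iio κ.ord) := ⟨⟨0, by
    show (0:Ordinal) < κ.ord; rw [Cardinal.lt_ord]
    simpa using lt_of_lt_of_le Cardinal.aleph0_pos hκ⟩⟩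
  have h2 : Cardinal.aleph κ.ord ≤ x.card := by
    rw [Cardinal.aleph_limit (Cardinal.isSuccLimit_ord hκ)]
    exact ciSup_le h1
  exact absurd (Cardinal.lt_ord.mp hx) (not_lt.mpr h2)

theorem stmt3 (X : Type u) [TopologicalSpace X] (κ : Cardinal.{u}) (hκ : ℵ₀ ≤ κ)
    (U : {α : Ordinal.{u} // α < κ.ord} → Set X)
    (hinj : Function.Injective U)
    (hopen : ∀ α, IsOpen (U α)) (hne : ∀ α, (U α).Nonempty)
    (hdisj : ∀ α β, α ≠ β → Disjoint (U α) (U β)) :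
    ¬ IsWeakPrecaliber X (Cardinal.aleph κ.ord) ∧
      ((∀ α : {α : Ordinal.{u} // α < κ.ord}, Cardinal.aleph α.1 ≤ oCard ↥(U α)) →
        ¬ IsWeakPrecaliberStar X (Cardinal.aleph κ.ord)) := by
  constructor
  · intro hwp
    set o : Ordinal.{u} := (Cardinal.aleph κ.ord).ord with ho
    set ξ : o.ToType → Ordinal.{u} := fun x => ((Ordinal.ToType.mk (o := o)).symm x).1 with hξ
    have hξinj : Function.Injective ξ := by
      intro x y hxy
      have := Subtype.ext (p := fun z => z ∈ Set.Iio o) hxy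
      exact (Ordinal.ToType.mk (o := o)).symm.injective this
    have hex : ∀ x : o.ToType, ∃ a : {α : Ordinal.{u} // α < κ.ord},
        ξ x < (Cardinal.aleph a.1).ord :=
      fun x => exists_index_lt κ hκ (ξ x) ((Ordinal.ToType.mk (o := o)).symm x).2
    choose g hg using hex
    have hcard : #o.ToType = Cardinal.aleph κ.ord := by
      rw [Cardinal.mk_toType, Cardinal.card_ord]
    obtain ⟨J, hJcard, hJlink⟩ := hwp (fun x => U (g x)) hcard
      (fun x => hopen _) (fun x => hne _)
    have hJne : J.Nonempty := by
      rw [← Set.nonempty_coe_sort, ← Cardinal.mk_ne_zero_iff, hJcard]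
      exact (lt_of_lt_of_le Cardinal.aleph0_pos (Cardinal.aleph0_le_aleph _)).ne'
    obtain ⟨x₀, hx₀⟩ := hJne
    have hsub : J ⊆ {x | g x = g x₀} := by
      intro x hx
      by_contra hne'
      exact ((hdisj _ _ hne').inter_eq ▸ hJlink x hx x₀ hx₀).ne_empty rfl
    have hFle : #{x : o.ToType | g x = g x₀} ≤ Cardinal.aleph (g x₀).1 := by
      have : Function.Injective (fun (x : {x : o.ToType | g x = g x₀}) =>
          Ordinal.ToType.mk (o := (Cardinal.aleph (g x₀).1).ord)
            ⟨ξ x.1, by have h := hg x.1; rw [x.2] at h; exact h⟩) := by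
        intro x y hxy
        have := congrArg Subtype.val ((Ordinal.ToType.mk).injective hxy)
        exact Subtype.ext (hξinj this)
      calc #{x : o.ToType | g x = g x₀} ≤ #((Cardinal.aleph (g x₀).1).ord).ToType :=
          Cardinal.mk_le_of_injective this
        _ = Cardinal.aleph (g x₀).1 := by rw [Cardinal.mk_toType, Cardinal.card_ord]
    have : Cardinal.aleph κ.ord < Cardinal.aleph κ.ord := by
      calc Cardinal.aleph κ.ord = #J := hJcard.symm
        _ ≤ #{x : o.ToType | g x = g x₀} := Cardinal.mk_le_mk_of_subset hsub
        _ ≤ Cardinal.aleph (g x₀).1 := hFle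
        _ < Cardinal.aleph κ.ord := Cardinal.aleph_lt_aleph.mpr (g x₀).2
    exact absurd this (lt_irrefl _)
  · intro hoc hwps
    have hS : ∀ a : {α : Ordinal.{u} // α < κ.ord}, ∃ S : Set (Set X),
        S ⊆ {V : Set X | V.Nonempty ∧ IsOpen V ∧ V ⊆ U a} ∧ #S = Cardinal.aleph a.1 := by
      intro a
      have hA : oCard ↥(U a) ≤ #{V : Set X | IsOpen V ∧ V ⊆ U a} := by
        have hi : Function.Injective (fun (W : {W : Set ↥(U a) | IsOpen W}) =>
            (⟨Subtype.val '' W.1, (hopen a).isOpenMap_subtype_val _ W.2,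
              Set.image_subset_iff.mpr (fun z _ => z.2)⟩ :
              {V : Set X | IsOpen V ∧ V ⊆ U a})) := by
          intro W₁ W₂ h
          have := congrArg Subtype.val h
          exact Subtype.ext ((Set.image_injective.mpr Subtype.val_injective) this)
        exact Cardinal.mk_le_of_injective hi
      have hB : #{V : Set X | IsOpen V ∧ V ⊆ U a} ≤
          #{V : Set X | V.Nonempty ∧ IsOpen V ∧ V ⊆ U a} + 1 := by
        have hsub : {V : Set X | IsOpen V ∧ V ⊆ U a} ⊆
            insert ∅ {V : Set X | V.Nonempty ∧ IsOpen V ∧ V ⊆ U a} := by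
          intro V hV
          rcases V.eq_empty_or_nonempty with h | h
          · exact h ▸ Set.mem_insert _ _
          · exact Set.mem_insert_of_mem _ ⟨h, hV.1, hV.2⟩
        exact (Cardinal.mk_le_mk_of_subset hsub).trans (Cardinal.mk_insert_le)
      have hC : Cardinal.aleph a.1 ≤ #{V : Set X | V.Nonempty ∧ IsOpen V ∧ V ⊆ U a} := by
        have h1 : Cardinal.aleph a.1 ≤ #{V : Set X | V.Nonempty ∧ IsOpen V ∧ V ⊆ U a} + 1 :=
          (hoc a).trans (hA.trans hB)
        rcases le_or_gt ℵ₀ #{V : Set X | V.Nonempty ∧ IsOpen V ∧ V ⊆ U a} with h | h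
        · rwa [Cardinal.add_one_eq h] at h1
        · exact absurd (lt_of_le_of_lt h1 (Cardinal.add_lt_aleph0 h Cardinal.one_lt_aleph0))
            (not_lt.mpr (Cardinal.aleph0_le_aleph _))
      exact Cardinal.le_mk_iff_exists_subset.mp hC
    choose S hSsub hScard using hS
    have hWle : Cardinal.aleph κ.ord ≤ #(⋃ a, S a) := by
      have hne' : Nonempty (Set.Iio κ.ord) := ⟨⟨0, by
        show (0:Ordinal) < κ.ord; rw [Cardinal.lt_ord]
        simpa using lt_of_lt_of_le Cardinal.aleph0_pos hκ⟩⟩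
      rw [Cardinal.aleph_limit (Cardinal.isSuccLimit_ord hκ)]
      refine ciSup_le fun a => ?_
      rw [← hScard ⟨a.1, a.2⟩]
      exact Cardinal.mk_le_mk_of_subset (Set.subset_iUnion S ⟨a.1, a.2⟩)
    obtain ⟨𝒰, h𝒰sub, h𝒰card⟩ := Cardinal.le_mk_iff_exists_subset.mp hWle
    have hmem : ∀ V ∈ 𝒰, ∃ a, V ∈ S a := fun V hV => Set.mem_iUnion.mp (h𝒰sub hV)
    obtain ⟨𝒱, h𝒱sub, h𝒱card, h𝒱link⟩ := hwps 𝒰 h𝒰card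
      (fun V hV => (hSsub _ ((hmem V hV).choose_spec)).2.1)
      (fun V hV => (hSsub _ ((hmem V hV).choose_spec)).1)
    have h𝒱ne : 𝒱.Nonempty := by
      rw [← Set.nonempty_coe_sort, ← Cardinal.mk_ne_zero_iff, h𝒱card]
      exact (lt_of_lt_of_le Cardinal.aleph0_pos (Cardinal.aleph0_le_aleph _)).ne'
    obtain ⟨V₀, hV₀⟩ := h𝒱ne
    obtain ⟨a₀, ha₀⟩ := hmem V₀ (h𝒱sub hV₀)
    have hsub : 𝒱 ⊆ S a₀ := by
      intro V hV
      obtain ⟨b, hb⟩ := hmem V (h𝒱sub hV)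
      obtain ⟨z, hz1, hz2⟩ := h𝒱link V hV V₀ hV₀
      have hba : b = a₀ := by
        by_contra hne'
        exact Set.disjoint_iff.mp (hdisj b a₀ hne')
          ⟨(hSsub b hb).2.2 hz1, (hSsub a₀ ha₀).2.2 hz2⟩
      exact hba ▸ hb
    have : Cardinal.aleph κ.ord < Cardinal.aleph κ.ord := by
      calc Cardinal.aleph κ.ord = #𝒱 := h𝒱card.symm
        _ ≤ #(S a₀) := Cardinal.mk_le_mk_of_subset hsub
        _ = Cardinal.aleph a₀.1 := hScard a₀
        _ < Cardinal.aleph κ.ord := Cardinal.aleph_lt_aleph.mpr a₀.2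
    exact absurd this (lt_irrefl _)
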